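/- Let F, G : [0,∞) → [0,1] be distribution functions whose generalized inverses satisfy the integral criterion ∫_{1/ε}^∞ F^{(−1)}(e^{−u})(1/u) du < ∞ and similarly for G. Let σ ~ F and γ ~ G be independent and let H be the distribution function of σ + γ. Then ∫_{1/ε'}^∞ H^{(−1)}(e^{−u})(1/u) du < ∞ for some ε' > 0. -/

import Mathlib

open MeasureTheory Set ProbabilityTheory
open scoped ENNReal

/-- The generalized inverse `F^{(-1)}(y) = inf {t : F(t) ≥ y}` of a distribution
function. -/
noncomputable def geninv (F : ℝ → ℝ) (y : ℝ) : ℝ := sInf {t : ℝ | y ≤ F t}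

lemma geninv_bddBelow {F : ℝ → ℝ} (hF0 : ∀ t ≤ (0:ℝ), F t = 0) {y : ℝ} (hy : 0 < y) :
    BddBelow {t : ℝ | y ≤ F t} := by
  refine ⟨0, fun s hs => ?_⟩
  by_contra h
  push_neg at h
  have := hF0 s h.le
  simp only [mem_setOf_eq] at hs
  linarith

lemma geninv_nonneg {F : ℝ → ℝ} (hF0 : ∀ t ≤ (0:ℝ), F t = 0) {y : ℝ} (hy : 0 < y) :
    0 ≤ geninv F y := by
  apply Real.sInf_nonneg
  intro t ht
  by_contra h
  push_neg at h
  have := hF0 t h.le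
  simp only [mem_setOf_eq] at ht
  linarith

lemma geninv_le {F : ℝ → ℝ} (hF0 : ∀ t ≤ (0:ℝ), F t = 0) {y t : ℝ} (hy : 0 < y)
    (ht : y ≤ F t) : geninv F y ≤ t :=
  csInf_le (geninv_bddBelow hF0 hy) ht

lemma geninv_mono {F : ℝ → ℝ} (hF0 : ∀ t ≤ (0:ℝ), F t = 0)
    (hex : ∀ y < (1:ℝ), ∃ t, y ≤ F t) {y₁ y₂ : ℝ} (hy₁ : 0 < y₁) (h12 : y₁ ≤ y₂)
    (hy₂ : y₂ < 1) : geninv F y₁ ≤ geninv F y₂ := by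
  obtain ⟨t, ht⟩ := hex y₂ hy₂
  exact csInf_le_csInf (geninv_bddBelow hF0 hy₁) ⟨t, ht⟩
    (fun s hs => le_trans h12 hs)

/-- If the generalized inverses of distribution functions `F` and `G` satisfy the
explosion integral criterion and `σ ~ F`, `γ ~ G` are independent, then the
distribution function of `σ + γ` also satisfies the criterion. -/
theorem integral_criterion_for_sum_of_independent
    {Ω : Type*} [MeasurableSpace Ω] (μ : Measure Ω) [IsProbabilityMeasure μ]
    (F G : ℝ → ℝ) (hFmono : Monotone F) (hGmono : Monotone G)
    (hF0 : ∀ t ≤ (0:ℝ), F t = 0) (hG0 : ∀ t ≤ (0:ℝ), G t = 0)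
    (hF1 : ∀ t, F t ≤ 1) (hG1 : ∀ t, G t ≤ 1)
    (σ γ : Ω → ℝ) (hσ : Measurable σ) (hγ : Measurable γ)
    (hindep : IndepFun σ γ μ)
    (hσF : ∀ t : ℝ, (μ {ω | σ ω ≤ t}).toReal = F t)
    (hγG : ∀ t : ℝ, (μ {ω | γ ω ≤ t}).toReal = G t)
    (ε : ℝ) (hε : 0 < ε)
    (hFint : ∫⁻ u in Ici (1 / ε),
      ENNReal.ofReal (geninv F (Real.exp (-u)) * (1 / u)) ≠ ⊤)
    (hGint : ∫⁻ u in Ici (1 / ε),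
      ENNReal.ofReal (geninv G (Real.exp (-u)) * (1 / u)) ≠ ⊤) :
    ∃ ε' > (0:ℝ), ∫⁻ u in Ici (1 / ε'),
      ENNReal.ofReal
        (geninv (fun t => (μ {ω | σ ω + γ ω ≤ t}).toReal) (Real.exp (-u)) * (1 / u))
        ≠ ⊤ := by
  set H : ℝ → ℝ := fun t => (μ {ω | σ ω + γ ω ≤ t}).toReal with hH
  set c : ℝ := 1 / ε with hc
  have hc0 : 0 < c := by positivity
  -- existence of points where F (resp. G) exceeds any y < 1
  have hexists : ∀ (X : Ω → ℝ) (D : ℝ → ℝ), (∀ t : ℝ, (μ {ω | X ω ≤ t}).toReal = D t) →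
      ∀ y < (1:ℝ), ∃ t, y ≤ D t := by
    intro X D hXD y hy
    by_contra h
    push_neg at h
    rcases le_or_gt y 0 with hy0 | hy0
    · exact absurd (h 0) (not_lt.mpr (by rw [← hXD 0]; exact le_trans hy0 ENNReal.toReal_nonneg))
    have hmeas : ∀ n : ℕ, μ {ω | X ω ≤ (n:ℝ)} ≤ ENNReal.ofReal y := by
      intro n
      have h1 : (μ {ω | X ω ≤ (n:ℝ)}).toReal ≤ y := (by rw [hXD]; exact (h n).le)
      calc μ {ω | X ω ≤ (n:ℝ)} = ENNReal.ofReal ((μ {ω | X ω ≤ (n:ℝ)}).toReal) :=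
            (ENNReal.ofReal_toReal (measure_ne_top μ _)).symm
        _ ≤ ENNReal.ofReal y := ENNReal.ofReal_le_ofReal h1
    have hunion : (⋃ n : ℕ, {ω | X ω ≤ (n:ℝ)}) = univ := by
      ext ω
      simp only [mem_iUnion, mem_setOf_eq, mem_univ, iff_true]
      obtain ⟨n, hn⟩ := exists_nat_ge (X ω)
      exact ⟨n, hn⟩
    have hdir : Directed (· ⊆ ·) (fun n : ℕ => {ω | X ω ≤ (n:ℝ)}) := by
      apply Monotone.directed_le
      intro n m hnm ω hω
      simp only [mem_setOf_eq] at hω ⊢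
      exact le_trans hω (by exact_mod_cast hnm)
    have h1 : (μ (univ : Set Ω)) ≤ ENNReal.ofReal y := by
      rw [← hunion, hdir.measure_iUnion]
      exact iSup_le hmeas
    rw [measure_univ] at h1
    exact absurd (lt_of_le_of_lt h1 (ENNReal.ofReal_lt_one.mpr hy)) (lt_irrefl _)
  have hFex := hexists σ F hσF
  have hGex := hexists γ G hγG
  -- H vanishes on nonpositive reals
  have hσ0 : μ {ω | σ ω ≤ (0:ℝ)} = 0 := by
    have := hσF 0
    rw [hF0 0 le_rfl] at this
    rcases (ENNReal.toReal_eq_zero_iff _).mp this with h | h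
    · exact h
    · exact absurd h (measure_ne_top μ _)
  have hγ0 : μ {ω | γ ω ≤ (0:ℝ)} = 0 := by
    have := hγG 0
    rw [hG0 0 le_rfl] at this
    rcases (ENNReal.toReal_eq_zero_iff _).mp this with h | h
    · exact h
    · exact absurd h (measure_ne_top μ _)
  have hH0 : ∀ t ≤ (0:ℝ), H t = 0 := by
    intro t ht
    have hsub : {ω | σ ω + γ ω ≤ t} ⊆ {ω | σ ω ≤ (0:ℝ)} ∪ {ω | γ ω ≤ (0:ℝ)} := by
      intro ω hω
      simp only [mem_setOf_eq] at hω
      by_contra hcon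
      simp only [mem_union, mem_setOf_eq, not_or, not_le] at hcon
      linarith [hcon.1, hcon.2]
    have : μ {ω | σ ω + γ ω ≤ t} = 0 :=
      measure_mono_null hsub (le_antisymm (le_trans (measure_union_le _ _)
        (by rw [hσ0, hγ0]; simp)) (zero_le))
    simp only [hH, this, ENNReal.toReal_zero]
  -- key inequality
  have key : ∀ y : ℝ, 0 < y → y < 1 → geninv H (y * y) ≤ geninv F y + geninv G y := by
    intro y hy0 hy1
    have hyy : 0 < y * y := mul_pos hy0 hy0
    have hmem : ∀ s ∈ {t : ℝ | y ≤ F t}, ∀ t ∈ {t : ℝ | y ≤ G t}, y * y ≤ H (s + t) := by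
      intro s hs t ht
      simp only [mem_setOf_eq] at hs ht
      have hind : μ ({ω | σ ω ≤ s} ∩ {ω | γ ω ≤ t})
          = μ {ω | σ ω ≤ s} * μ {ω | γ ω ≤ t} := by
        have := hindep.measure_inter_preimage_eq_mul (Iic s) (Iic t)
          measurableSet_Iic measurableSet_Iic
        simpa [Set.preimage, Set.mem_Iic] using this
      have hsub : {ω | σ ω ≤ s} ∩ {ω | γ ω ≤ t} ⊆ {ω | σ ω + γ ω ≤ s + t} := by
        rintro ω ⟨h1, h2⟩
        simp only [mem_setOf_eq] at h1 h2 ⊢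
        exact add_le_add h1 h2
      calc y * y ≤ F s * G t := by
            apply mul_le_mul hs ht hy0.le
            linarith [hs, hy0]
        _ = (μ {ω | σ ω ≤ s} * μ {ω | γ ω ≤ t}).toReal := by
            rw [ENNReal.toReal_mul, hσF, hγG]
        _ = (μ ({ω | σ ω ≤ s} ∩ {ω | γ ω ≤ t})).toReal := by rw [hind]
        _ ≤ H (s + t) :=
            ENNReal.toReal_mono (measure_ne_top μ _) (measure_mono hsub)
    obtain ⟨s₀, hs₀⟩ := hFex y hy1
    obtain ⟨t₀, ht₀⟩ := hGex y hy1
    have hst : ∀ s ∈ {t : ℝ | y ≤ F t}, ∀ t ∈ {t : ℝ | y ≤ G t},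
        geninv H (y * y) ≤ s + t := fun s hs t ht =>
      geninv_le hH0 hyy (hmem s hs t ht)
    have h1 : ∀ t ∈ {t : ℝ | y ≤ G t}, geninv H (y * y) - t ≤ geninv F y := by
      intro t ht
      exact le_csInf (⟨s₀, hs₀⟩ : Set.Nonempty {t : ℝ | y ≤ F t})
        (fun s hs => by have := hst s hs t ht; linarith)
    have h2 : geninv H (y * y) - geninv F y ≤ geninv G y := by
      exact le_csInf (⟨t₀, ht₀⟩ : Set.Nonempty {t : ℝ | y ≤ G t})
        (fun t ht => by have := h1 t ht; linarith)
    linarith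
  -- the clamped comparison functions
  set AF : ℝ → ℝ := fun u => geninv F (Real.exp (-(max (u / 2) c))) with hAF
  set AG : ℝ → ℝ := fun u => geninv G (Real.exp (-(max (u / 2) c))) with hAG
  have hanti : ∀ (D : ℝ → ℝ), (∀ t ≤ (0:ℝ), D t = 0) → (∀ y < (1:ℝ), ∃ t, y ≤ D t) →
      Antitone (fun u => geninv D (Real.exp (-(max (u / 2) c)))) := by
    intro D hD0 hDex u₁ u₂ h12
    have hm : max (u₁ / 2) c ≤ max (u₂ / 2) c :=
      max_le_max (by linarith) le_rfl
    have hc₁ : c ≤ max (u₁ / 2) c := le_max_right _ _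
    apply geninv_mono hD0 hDex (Real.exp_pos _)
      (Real.exp_le_exp.mpr (by linarith))
    calc Real.exp (-(max (u₁ / 2) c)) ≤ Real.exp (-c) :=
          Real.exp_le_exp.mpr (by linarith)
      _ < 1 := Real.exp_lt_one_iff.mpr (by linarith)
  have hAFanti : Antitone AF := hanti F hF0 hFex
  have hAGanti : Antitone AG := hanti G hG0 hGex
  have hAFmeas : Measurable AF := hAFanti.measurable
  have hAGmeas : Measurable AG := hAGanti.measurable
  set φF : ℝ → ℝ≥0∞ := fun u => ENNReal.ofReal (AF u * (1 / u)) with hφF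
  set φG : ℝ → ℝ≥0∞ := fun u => ENNReal.ofReal (AG u * (1 / u)) with hφG
  have hinv : Measurable (fun u : ℝ => 1 / u) := by
    simpa [one_div] using (measurable_inv : Measurable fun u : ℝ => u⁻¹)
  have hφFmeas : Measurable φF := (hAFmeas.mul hinv).ennreal_ofReal
  have hφGmeas : Measurable φG := (hAGmeas.mul hinv).ennreal_ofReal
  -- substitution: ∫_{Ici (2c)} φ u du = ∫_{Ici c} ofReal (geninv D (exp (-v)) * (1/v)) dv
  have hsubst : ∀ (D : ℝ → ℝ) (A : ℝ → ℝ) (φ : ℝ → ℝ≥0∞), Measurable φ →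
      (A = fun u => geninv D (Real.exp (-(max (u / 2) c)))) →
      (φ = fun u => ENNReal.ofReal (A u * (1 / u))) →
      ∫⁻ u in Ici (2 * c), φ u
        = ∫⁻ v in Ici c, ENNReal.ofReal (geninv D (Real.exp (-v)) * (1 / v)) := by
    intro D A φ hφmeas hA hφ
    have hT : Measurable (fun v : ℝ => 2 * v) := measurable_const_mul 2
    have hpre : (fun v : ℝ => 2 * v) ⁻¹' Ici (2 * c) = Ici c := by
      ext v
      simp only [mem_preimage, mem_Ici]
      constructor <;> intro h <;> linarith
    have hmap : (volume.map (fun v : ℝ => 2 * v)).restrict (Ici (2 * c))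
        = (volume.restrict (Ici c)).map (fun v : ℝ => 2 * v) := by
      rw [Measure.restrict_map hT measurableSet_Ici, hpre]
    have hvol : Measure.map (fun v : ℝ => 2 * v) volume
        = ENNReal.ofReal |(2:ℝ)⁻¹| • volume := Real.map_volume_mul_left two_ne_zero
    have habs : ENNReal.ofReal |(2:ℝ)⁻¹| = (2 : ℝ≥0∞)⁻¹ := by
      rw [abs_of_pos (by norm_num : (0:ℝ) < 2⁻¹)]
      rw [ENNReal.ofReal_inv_of_pos (by norm_num : (0:ℝ) < 2)]
      norm_num
    have e1 : ∫⁻ u in Ici (2 * c), φ u ∂(volume.map (fun v : ℝ => 2 * v))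
        = (2 : ℝ≥0∞)⁻¹ * ∫⁻ u in Ici (2 * c), φ u := by
      rw [hvol, habs, Measure.restrict_smul, lintegral_smul_measure, smul_eq_mul]
    have e2 : ∫⁻ u in Ici (2 * c), φ u ∂(volume.map (fun v : ℝ => 2 * v))
        = ∫⁻ v in Ici c, φ (2 * v) := by
      rw [hmap, lintegral_map hφmeas hT]
    have e3 : ∫⁻ v in Ici c, φ (2 * v)
        = ∫⁻ v in Ici c, (2 : ℝ≥0∞)⁻¹ * ENNReal.ofReal (geninv D (Real.exp (-v)) * (1 / v)) := by
      apply setLIntegral_congr_fun measurableSet_Ici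
      intro v hv
      have hv0 : 0 < v := lt_of_lt_of_le hc0 hv
      rw [mem_Ici] at hv
      have hmax : max ((2 * v) / 2) c = v := by
        rw [show (2 * v) / 2 = v by ring]
        exact max_eq_left hv
      have harg : A (2 * v) = geninv D (Real.exp (-v)) := by
        rw [hA]
        simp only
        rw [hmax]
      rw [hφ]
      simp only
      rw [harg]
      rw [show geninv D (Real.exp (-v)) * (1 / (2 * v))
        = (geninv D (Real.exp (-v)) * (1 / v)) / 2 by rw [mul_div_assoc, div_div, mul_comm v 2]]
      rw [ENNReal.ofReal_div_of_pos (by norm_num : (0:ℝ) < 2)]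
      rw [ENNReal.div_eq_inv_mul, ENNReal.ofReal_ofNat]
    have e4 : ∫⁻ v in Ici c, (2 : ℝ≥0∞)⁻¹ * ENNReal.ofReal (geninv D (Real.exp (-v)) * (1 / v))
        = (2 : ℝ≥0∞)⁻¹ * ∫⁻ v in Ici c, ENNReal.ofReal (geninv D (Real.exp (-v)) * (1 / v)) :=
      lintegral_const_mul' _ _ (by simp)
    have := e1.symm.trans (e2.trans (e3.trans e4))
    -- (2:ℝ≥0∞)⁻¹ * I1 = (2:ℝ≥0∞)⁻¹ * I2, cancel
    have h2 : (2 : ℝ≥0∞)⁻¹ ≠ 0 := by simp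
    have h2' : (2 : ℝ≥0∞)⁻¹ ≠ ⊤ := by simp
    exact (ENNReal.mul_right_inj h2 h2').mp this
  have hFsub := hsubst F AF φF hφFmeas hAF hφF
  have hGsub := hsubst G AG φG hφGmeas hAG hφG
  -- conclusion with ε' = ε / 2
  refine ⟨ε / 2, by positivity, ?_⟩
  have hεeq : 1 / (ε / 2) = 2 * c := by
    rw [hc, one_div_div, div_eq_mul_inv, one_div]
  rw [hεeq]
  have hbound : ∫⁻ u in Ici (2 * c),
      ENNReal.ofReal (geninv H (Real.exp (-u)) * (1 / u))
      ≤ ∫⁻ u in Ici (2 * c), (φF u + φG u) := by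
    apply setLIntegral_mono (hφFmeas.add hφGmeas)
    intro u hu
    have hu0 : 0 < u := lt_of_lt_of_le (by linarith) hu
    have hu2 : c ≤ u / 2 := by
      rw [mem_Ici] at hu
      linarith
    have hmax : max (u / 2) c = u / 2 := max_eq_left hu2
    set y : ℝ := Real.exp (-(u / 2)) with hy
    have hy0 : 0 < y := Real.exp_pos _
    have hy1 : y < 1 := Real.exp_lt_one_iff.mpr (by linarith)
    have hyy : Real.exp (-u) = y * y := by
      rw [hy, ← Real.exp_add]
      ring_nf
    have hkey : geninv H (Real.exp (-u)) ≤ geninv F y + geninv G y := by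
      rw [hyy]
      exact key y hy0 hy1
    have hAFu : AF u = geninv F y := by rw [hAF]; simp only; rw [hmax]
    have hAGu : AG u = geninv G y := by rw [hAG]; simp only; rw [hmax]
    have hFnn : 0 ≤ geninv F y := geninv_nonneg hF0 hy0
    have hGnn : 0 ≤ geninv G y := geninv_nonneg hG0 hy0
    have hinvnn : 0 ≤ 1 / u := by positivity
    calc ENNReal.ofReal (geninv H (Real.exp (-u)) * (1 / u))
        ≤ ENNReal.ofReal ((geninv F y + geninv G y) * (1 / u)) :=
          ENNReal.ofReal_le_ofReal (mul_le_mul_of_nonneg_right hkey hinvnn)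
      _ = ENNReal.ofReal (geninv F y * (1 / u) + geninv G y * (1 / u)) := by ring_nf
      _ = ENNReal.ofReal (geninv F y * (1 / u)) + ENNReal.ofReal (geninv G y * (1 / u)) :=
          ENNReal.ofReal_add (by positivity) (by positivity)
      _ = φF u + φG u := by rw [hφF, hφG]; simp only; rw [hAFu, hAGu]
  have hsum : ∫⁻ u in Ici (2 * c), (φF u + φG u)
      = (∫⁻ u in Ici (2 * c), φF u) + ∫⁻ u in Ici (2 * c), φG u :=
    lintegral_add_left hφFmeas _
  intro htop
  rw [hsum, hFsub, hGsub] at hbound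
  have : (∫⁻ v in Ici c, ENNReal.ofReal (geninv F (Real.exp (-v)) * (1 / v)))
      + ∫⁻ v in Ici c, ENNReal.ofReal (geninv G (Real.exp (-v)) * (1 / v)) ≠ ⊤ :=
    ENNReal.add_ne_top.mpr ⟨hFint, hGint⟩
  exact this (top_le_iff.mp (htop ▸ hbound))
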